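/- Let (Ω, μ) be a measure space, 1 ≤ p < ∞, and let h ∈ L^p(μ) with h ≥ 0 almost everywhere. Then the set {h·f : f ∈ L^∞(μ)} is dense in the closed subspace {g ∈ L^p(μ) : g = 0 almost everywhere on the set {h = 0}} of L^p(μ). -/

import Mathlib

open MeasureTheory
open scoped ENNReal

/-- Commutative instance of the density lemma: for `1 ≤ p < ∞` and `0 ≤ h ∈ L^p(μ)`,
the set `{h·f : f ∈ L^∞(μ)}` is dense in the subspace of those `g ∈ L^p(μ)` vanishing
almost everywhere on `{h = 0}`. -/
theorem mul_Linfty_dense_in_support_subspace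
    {Ω : Type*} [MeasurableSpace Ω] (μ : Measure Ω)
    (p : ℝ) (hp : 1 ≤ p)
    (h : Ω → ℝ) (hmem : MemLp h (ENNReal.ofReal p) μ) (hpos : 0 ≤ᵐ[μ] h)
    (g : Ω → ℝ) (hg : MemLp g (ENNReal.ofReal p) μ)
    (hsupp : ∀ᵐ ω ∂μ, h ω = 0 → g ω = 0)
    (ε : ℝ≥0∞) (hε : 0 < ε) :
    ∃ f : Ω → ℝ, MemLp f ∞ μ ∧
      eLpNorm (fun ω => h ω * f ω - g ω) (ENNReal.ofReal p) μ < ε := by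
  have hp0 : (0 : ℝ) < p := lt_of_lt_of_le one_pos hp
  set P := ENNReal.ofReal p with hPdef
  have hP0 : P ≠ 0 := by simp [hPdef, ENNReal.ofReal_eq_zero, not_le, hp0]
  have hPt : P ≠ ∞ := ENNReal.ofReal_ne_top
  have hPr : P.toReal = p := ENNReal.toReal_ofReal hp0.le
  -- measurable representatives
  obtain ⟨H, hHmeas, hH⟩ := hmem.1
  obtain ⟨G, hGmeas, hG⟩ := hg.1
  -- the truncated quotients
  set F : ℕ → Ω → ℝ := fun n ω => if |G ω| ≤ n * H ω then G ω / H ω else 0 with hF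
  have hFmeas : ∀ n, Measurable (F n) := by
    intro n
    exact Measurable.ite
      (measurableSet_le (hGmeas.measurable.abs) (hHmeas.measurable.const_mul _))
      (hGmeas.measurable.div hHmeas.measurable) measurable_const
  -- boundedness of F n
  have hFbd : ∀ n ω, |F n ω| ≤ n := by
    intro n ω
    by_cases hc : |G ω| ≤ n * H ω
    · simp only [hF, if_pos hc]
      by_cases hH0 : H ω = 0
      · simp [hH0]
      · rcases lt_or_gt_of_ne hH0 with h1 | h1
        · have hm : (n : ℝ) * H ω ≤ 0 :=
            mul_nonpos_of_nonneg_of_nonpos (Nat.cast_nonneg n) h1.le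
          have hG0 : G ω = 0 :=
            abs_nonpos_iff.mp (le_trans hc hm)
          simp [hG0]
        · rw [abs_div, abs_of_pos h1, div_le_iff₀ h1]
          linarith [hc]
    · simp [hF, if_neg hc]
  -- the key identity for the difference
  have hDval : ∀ n ω, H ω * F n ω - G ω = if |G ω| ≤ n * H ω then 0 else -G ω := by
    intro n ω
    by_cases hc : |G ω| ≤ n * H ω
    · simp only [hF, if_pos hc]
      by_cases hH0 : H ω = 0
      · have : G ω = 0 := by
          have : |G ω| ≤ 0 := by simpa [hH0] using hc
          exact abs_nonpos_iff.mp this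
        simp [hH0, this]
      · field_simp; ring
    · simp [hF, if_neg hc]
  set D : ℕ → Ω → ℝ := fun n ω => H ω * F n ω - G ω with hD
  have hDbd : ∀ n ω, |D n ω| ≤ |G ω| := by
    intro n ω
    rw [hD]; simp only; rw [hDval n ω]
    by_cases hc : |G ω| ≤ n * H ω <;> simp [hc, abs_nonneg]
  -- a.e. eventual vanishing of D
  have hae : ∀ᵐ ω ∂μ, ∃ N : ℕ, ∀ n ≥ N, D n ω = 0 := by
    filter_upwards [hH, hG, hpos, hsupp] with ω hHω hGω hposω hsuppω
    by_cases hG0 : G ω = 0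
    · refine ⟨0, fun n _ => ?_⟩
      have hc : |G ω| ≤ n * H ω := by
        rw [hG0, abs_zero]
        have : (0:ℝ) ≤ H ω := by rw [← hHω]; exact hposω
        positivity
      rw [hD]; simp only; rw [hDval n ω, if_pos hc]
    · have hh0 : h ω ≠ 0 := fun hz => hG0 (by rw [← hGω]; exact hsuppω hz)
      have hHpos : 0 < H ω := by
        rw [← hHω]; exact lt_of_le_of_ne hposω (Ne.symm hh0)
      obtain ⟨N, hN⟩ := exists_nat_ge (|G ω| / H ω)
      refine ⟨N, fun n hn => ?_⟩
      have hc : |G ω| ≤ n * H ω := by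
        rw [div_le_iff₀ hHpos] at hN
        calc |G ω| ≤ N * H ω := hN
        _ ≤ n * H ω := by
          apply mul_le_mul_of_nonneg_right _ hHpos.le
          exact_mod_cast hn
      rw [hD]; simp only; rw [hDval n ω, if_pos hc]
  -- lintegral convergence via dominated convergence
  set Fl : ℕ → Ω → ℝ≥0∞ := fun n ω => (‖D n ω‖₊ : ℝ≥0∞) ^ p with hFl
  have hFlmeas : ∀ n, Measurable (Fl n) := by
    intro n
    apply Measurable.pow_const
    apply Measurable.coe_nnreal_ennreal
    apply Measurable.nnnorm
    exact (hHmeas.measurable.mul (hFmeas n)).sub hGmeas.measurable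
  have hbound : ∀ n, Fl n ≤ᵐ[μ] fun ω => (‖G ω‖₊ : ℝ≥0∞) ^ p := by
    intro n
    refine Filter.Eventually.of_forall fun ω => ?_
    apply ENNReal.rpow_le_rpow _ hp0.le
    rw [ENNReal.coe_le_coe]
    simpa [← NNReal.coe_le_coe, coe_nnnorm, Real.norm_eq_abs] using hDbd n ω
  have hGlt : (∫⁻ ω, (‖G ω‖₊ : ℝ≥0∞) ^ p ∂μ) < ∞ := by
    have : eLpNorm G P μ < ∞ := by
      rw [eLpNorm_congr_ae hG.symm]; exact hg.2
    have := lintegral_rpow_enorm_lt_top_of_eLpNorm_lt_top hP0 hPt this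
    rwa [hPr] at this
  have hlim : ∀ᵐ ω ∂μ, Filter.Tendsto (fun n => Fl n ω) Filter.atTop (nhds 0) := by
    filter_upwards [hae] with ω ⟨N, hN⟩
    apply Filter.Tendsto.congr' _ tendsto_const_nhds
    filter_upwards [Filter.eventually_ge_atTop N] with n hn
    rw [hFl]; simp only; rw [hN n hn]
    simp [ENNReal.zero_rpow_of_pos hp0]
  have htend : Filter.Tendsto (fun n => ∫⁻ ω, Fl n ω ∂μ) Filter.atTop (nhds 0) := by
    have := tendsto_lintegral_of_dominated_convergence _ hFlmeas hbound hGlt.ne hlim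
    simpa using this
  have hεp : (0 : ℝ≥0∞) < ε ^ p := by
    by_cases hεt : ε = ⊤
    · simp [hεt, ENNReal.top_rpow_of_pos hp0]
    · exact ENNReal.rpow_pos hε hεt
  obtain ⟨N, hNlt⟩ := ((tendsto_order.1 htend).2 (ε ^ p) hεp).exists
  refine ⟨F N, ?_, ?_⟩
  · exact memLp_top_of_bound (hFmeas N).aestronglyMeasurable N
      (Filter.Eventually.of_forall fun ω => by
        simpa [Real.norm_eq_abs] using hFbd N ω)
  · have heq : (fun ω => h ω * F N ω - g ω) =ᵐ[μ] D N := by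
      filter_upwards [hH, hG] with ω hHω hGω
      rw [hD]; simp only; rw [hHω, hGω]
    rw [eLpNorm_congr_ae heq, eLpNorm_eq_lintegral_rpow_enorm_toReal hP0 hPt, hPr]
    have h1p : (0 : ℝ) < 1 / p := by positivity
    calc (∫⁻ ω, (‖D N ω‖₊ : ℝ≥0∞) ^ p ∂μ) ^ (1 / p)
        < (ε ^ p) ^ (1 / p) := ENNReal.rpow_lt_rpow hNlt h1p
      _ = ε := by
        rw [← ENNReal.rpow_mul, mul_one_div_cancel hp0.ne', ENNReal.rpow_one]
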